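/- Let a, b : ℝ with 0 < a and a ≠ 1, let x* = b / (1 − a), and define Φ₀ : ℝ → ℝ by Φ₀ x = −Real.log (x* − x). Then Φ₀ is strictly monotone on the interval (−∞, x*), the image of (−∞, x*) under Φ₀ is all of ℝ, and for every x < x* one has Φ₀ (a * x + b) = Φ₀ x − Real.log a. -/

import Mathlib

theorem phi0_iso (a b : ℝ) (ha : 0 < a) (ha1 : a ≠ 1) :
    StrictMonoOn (fun x : ℝ => -Real.log (b / (1 - a) - x)) (Set.Iio (b / (1 - a))) ∧
    (fun x : ℝ => -Real.log (b / (1 - a) - x)) '' Set.Iio (b / (1 - a)) = Set.univ ∧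
    ∀ x : ℝ, x < b / (1 - a) →
      -Real.log (b / (1 - a) - (a * x + b)) = -Real.log (b / (1 - a) - x) - Real.log a := by
  set s := b / (1 - a) with hs
  refine ⟨?_, ?_, ?_⟩
  · intro x hx y hy hxy
    simp only [Set.mem_Iio] at hx hy
    have h1 : 0 < s - y := by linarith
    have h2 : s - y < s - x := by linarith
    have := Real.log_lt_log h1 h2
    simpa using this
  · ext y
    simp only [Set.mem_image, Set.mem_univ, iff_true]
    refine ⟨s - Real.exp (-y), ?_, ?_⟩
    · simp [Set.mem_Iio, Real.exp_pos]
    · simp [Real.log_exp]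
  · intro x hx
    have hxs : 0 < s - x := by linarith
    have ha0 : (1 : ℝ) - a ≠ 0 := by
      intro h; apply ha1; linarith
    have key : s - (a * x + b) = a * (s - x) := by
      field_simp [hs]
      have hsb : s * (1 - a) = b := by rw [hs]; exact div_mul_cancel₀ b ha0
      linear_combination hsb
    rw [key, Real.log_mul (ne_of_gt ha) (ne_of_gt hxs)]
    ring
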